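/- For any graph G = (V,E), define the bipartite graph B_e[G] with vertex set V × {1,2}, where (u,i) and (v,j) are adjacent if and only if i ≠ j and (either u = v or uv ∈ E). Then Biclique(B_e[G]) ≤ 2·Biclique(G) + 1, where Biclique(G) denotes the largest k such that G contains two disjoint sets S, T each of size k with every vertex of S adjacent to every vertex of T. -/

import Mathlib

/-- The bipartite graph B_e[G] on V × {1,2}: (u,i) ~ (v,j) iff i ≠ j and (u = v or uv ∈ E). -/
def BeGraph {V : Type*} (G : SimpleGraph V) : SimpleGraph (V × Fin 2) :=
  SimpleGraph.fromRel fun p q => p.2 ≠ q.2 ∧ (p.1 = q.1 ∨ G.Adj p.1 q.1)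

/-- The (balanced) biclique number of a graph: the largest k such that there are two
disjoint k-sets with all edges between them present. -/
noncomputable def bicliqueNum {α : Type*} (G : SimpleGraph α) : ℕ :=
  sSup {k | ∃ S T : Finset α, Disjoint S T ∧ S.card = k ∧ T.card = k ∧
    ∀ a ∈ S, ∀ b ∈ T, G.Adj a b}

/-- Biclique(B_e[G]) ≤ 2·Biclique(G) + 1. -/
theorem stmt_12 {V : Type*} [Fintype V] (G : SimpleGraph V) :
    bicliqueNum (BeGraph G) ≤ 2 * bicliqueNum G + 1 := by
  classical
  rw [bicliqueNum]
  have h0 : (0:ℕ) ∈ {k | ∃ S T : Finset (V × Fin 2), Disjoint S T ∧ S.card = k ∧ T.card = k ∧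
      ∀ a ∈ S, ∀ b ∈ T, (BeGraph G).Adj a b} := ⟨∅, ∅, by simp, by simp, by simp, by simp⟩
  apply csSup_le ⟨0, h0⟩
  rintro k ⟨S, T, hST, hS, hT, hadj⟩
  rcases Nat.eq_zero_or_pos k with rfl | hk
  · omega
  obtain ⟨t0, ht0⟩ : T.Nonempty := Finset.card_pos.mp (hT ▸ hk)
  obtain ⟨s0, hs0⟩ : S.Nonempty := Finset.card_pos.mp (hS ▸ hk)
  have fin2 : ∀ x y z : Fin 2, x ≠ z → y ≠ z → x = y := by decide
  have hne2 : ∀ a b : V × Fin 2, (BeGraph G).Adj a b → a.2 ≠ b.2 := by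
    intro a b hab
    rw [BeGraph, SimpleGraph.fromRel_adj] at hab
    rcases hab.2 with ⟨h, _⟩ | ⟨h, _⟩
    · exact h
    · exact h.symm
  have hGadj : ∀ a b : V × Fin 2, (BeGraph G).Adj a b → a.1 ≠ b.1 → G.Adj a.1 b.1 := by
    intro a b hab hne
    rw [BeGraph, SimpleGraph.fromRel_adj] at hab
    rcases hab.2 with ⟨_, h | h⟩ | ⟨_, h | h⟩
    · exact absurd h hne
    · exact h
    · exact absurd h.symm hne
    · exact h.symm
  have hinjS : Set.InjOn Prod.fst (↑S : Set (V × Fin 2)) := by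
    intro a ha b hb hab
    have h1 := hne2 _ _ (hadj a ha t0 ht0)
    have h2 := hne2 _ _ (hadj b hb t0 ht0)
    exact Prod.ext hab (fin2 _ _ _ h1 h2)
  have hinjT : Set.InjOn Prod.fst (↑T : Set (V × Fin 2)) := by
    intro a ha b hb hab
    have h1 := hne2 _ _ (hadj s0 hs0 a ha)
    have h2 := hne2 _ _ (hadj s0 hs0 b hb)
    exact Prod.ext hab (fin2 _ _ _ (Ne.symm h1) (Ne.symm h2))
  set T1 : Finset V := S.image Prod.fst with hT1
  set T2 : Finset V := T.image Prod.fst with hT2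
  have hcT1 : T1.card = k := by rw [hT1, Finset.card_image_of_injOn hinjS, hS]
  have hcT2 : T2.card = k := by rw [hT2, Finset.card_image_of_injOn hinjT, hT]
  have key : ∀ u ∈ T1, ∀ v ∈ T2, u ≠ v → G.Adj u v := by
    intro u hu v hv huv
    obtain ⟨a, ha, rfl⟩ := Finset.mem_image.mp hu
    obtain ⟨b, hb, rfl⟩ := Finset.mem_image.mp hv
    exact hGadj _ _ (hadj a ha b hb) huv
  set I := T1 ∩ T2 with hI
  obtain ⟨A, hAI, hAcard⟩ := Finset.exists_subset_card_eq (s := I) (n := I.card / 2) (Nat.div_le_self _ _)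
  set B := I \ A with hB
  have hBcard : B.card = I.card - I.card / 2 := by
    rw [hB, Finset.card_sdiff_of_subset hAI, hAcard]
  set S' := (T1 \ T2) ∪ A with hS'
  set T' := (T2 \ T1) ∪ B with hT'
  have hIcard : I.card ≤ k := by
    calc I.card ≤ T1.card := Finset.card_le_card (Finset.inter_subset_left)
    _ = k := hcT1
  have hS'card : S'.card = (k - I.card) + I.card / 2 := by
    have h := Finset.card_sdiff_add_card_inter T1 T2
    rw [← hI, hcT1] at h
    rw [hS', Finset.card_union_of_disjoint, hAcard]
    · omega
    · refine Finset.disjoint_left.mpr fun x hx hxA => ?_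
      have := hAI hxA
      rw [hI] at this
      exact (Finset.mem_sdiff.mp hx).2 (Finset.mem_inter.mp this).2
  have hT'card : T'.card = (k - I.card) + (I.card - I.card / 2) := by
    have h := Finset.card_sdiff_add_card_inter T2 T1
    rw [Finset.inter_comm, ← hI, hcT2] at h
    rw [hT', Finset.card_union_of_disjoint, hBcard]
    · omega
    · refine Finset.disjoint_left.mpr fun x hx hxB => ?_
      have := Finset.mem_sdiff.mp hxB
      rw [hI] at this
      exact (Finset.mem_sdiff.mp hx).2 (Finset.mem_inter.mp this.1).1
  have hS'sub : S' ⊆ T1 := by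
    rw [hS']
    apply Finset.union_subset (Finset.sdiff_subset)
    exact fun x hx => (Finset.mem_inter.mp (hAI hx)).1
  have hT'sub : T' ⊆ T2 := by
    rw [hT']
    apply Finset.union_subset (Finset.sdiff_subset)
    exact fun x hx => (Finset.mem_inter.mp ((Finset.sdiff_subset) hx)).2
  have hdisj : Disjoint S' T' := by
    rw [hS', hT']
    rw [Finset.disjoint_union_left]
    constructor
    · rw [Finset.disjoint_union_right]
      refine ⟨?_, ?_⟩
      · exact Finset.disjoint_left.mpr fun x hx hy =>
          (Finset.mem_sdiff.mp hx).2 (Finset.mem_sdiff.mp hy).1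
      · refine Finset.disjoint_left.mpr fun x hx hy => ?_
        have hxI : x ∈ I := Finset.sdiff_subset hy
        rw [hI] at hxI
        exact (Finset.mem_sdiff.mp hx).2 (Finset.mem_inter.mp hxI).2
    · rw [Finset.disjoint_union_right]
      refine ⟨?_, ?_⟩
      · exact Finset.disjoint_left.mpr fun x hx hy =>
          (Finset.mem_sdiff.mp hy).2 (Finset.mem_inter.mp (hAI hx)).1
      · exact Finset.disjoint_left.mpr fun x hx hy => (Finset.mem_sdiff.mp hy).2 hx
  have hadj' : ∀ a ∈ S', ∀ b ∈ T', G.Adj a b := by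
    intro a ha b hb
    apply key a (hS'sub ha) b (hT'sub hb)
    intro h
    exact (Finset.disjoint_left.mp hdisj ha) (h ▸ hb)
  -- shrink to size k/2
  set m := k / 2 with hm
  have hmS : m ≤ S'.card := by omega
  have hmT : m ≤ T'.card := by omega
  obtain ⟨S'', hS''sub, hS''card⟩ := Finset.exists_subset_card_eq (s := S') (n := m) hmS
  obtain ⟨T'', hT''sub, hT''card⟩ := Finset.exists_subset_card_eq (s := T') (n := m) hmT
  have hmem : m ∈ {k | ∃ S T : Finset V, Disjoint S T ∧ S.card = k ∧ T.card = k ∧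
      ∀ a ∈ S, ∀ b ∈ T, G.Adj a b} :=
    ⟨S'', T'', hdisj.mono hS''sub hT''sub, hS''card, hT''card,
      fun a ha b hb => hadj' a (hS''sub ha) b (hT''sub hb)⟩
  have hbdd : BddAbove {k | ∃ S T : Finset V, Disjoint S T ∧ S.card = k ∧ T.card = k ∧
      ∀ a ∈ S, ∀ b ∈ T, G.Adj a b} := by
    refine ⟨Fintype.card V, fun n hn => ?_⟩
    obtain ⟨S, T, _, hS, _, _⟩ := hn
    exact hS ▸ Finset.card_le_univ S
  have := le_csSup hbdd hmem
  rw [bicliqueNum]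
  omega
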